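/- If a finite group G is left unidegree, i.e. d^⊗(G) = d(G), then Z(G) = Z^⊗(G). -/

import Mathlib

open scoped commutatorElement

/-- Corollary 2.8 (first part): if a finite group `G` is left unidegree, i.e.
`d⊗(G) = d(G)`, then `Z(G) = Z⊗(G)`. The tensor square is modelled by a group `T`,
a pairing `t` and the commutator homomorphism `κ`, with conjugation invariance and the
index bound `|G : C_G^⊗(x)| ≥ p` for `x ∉ Z⊗(G)`, where `p` is the smallest prime
divisor of `|G|`. -/
theorem center_eq_tensor_center_of_left_unidegree
    {G T : Type*} [Group G] [Fintype G] [Group T]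
    (t : G → G → T) (κ : T →* G)
    (hκ : ∀ a b : G, κ (t a b) = ⁅a, b⁆)
    (hconj : ∀ g a x : G, t a x = 1 ↔ t (g⁻¹ * a * g) (g⁻¹ * x * g) = 1)
    (p : ℕ) (hp : p.Prime) (hdvd : p ∣ Fintype.card G)
    (hmin : ∀ q : ℕ, q.Prime → q ∣ Fintype.card G → p ≤ q)
    (hindex : ∀ x : G, (¬ ∀ y : G, t x y = 1) →
      p * Nat.card {a : G // t a x = 1} ≤ Fintype.card G)
    (hunideg : (Nat.card {q : G × G // t q.1 q.2 = 1} : ℝ) / (Fintype.card G : ℝ) ^ 2 =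
      (Nat.card {q : G × G // Commute q.1 q.2} : ℝ) / (Fintype.card G : ℝ) ^ 2) :
    (Subgroup.center G : Set G) = {g : G | ∀ y : G, t g y = 1} := by
  have hGpos : (0 : ℝ) < (Fintype.card G : ℝ) ^ 2 := by
    have : 0 < Fintype.card G := Fintype.card_pos
    positivity
  -- equal cardinalities
  have hcard : Nat.card {q : G × G // t q.1 q.2 = 1} =
      Nat.card {q : G × G // Commute q.1 q.2} := by
    simpa [div_eq_mul_inv] using hunideg
  set S : Set (G × G) := {q | t q.1 q.2 = 1} with hS
  set C : Set (G × G) := {q | Commute q.1 q.2} with hC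
  have hsub : S ⊆ C := by
    intro q hq
    have h1 : κ (t q.1 q.2) = ⁅q.1, q.2⁆ := hκ q.1 q.2
    have : ⁅q.1, q.2⁆ = 1 := by
      rw [← h1, hq]; simp
    exact commutatorElement_eq_one_iff_commute.mp this
  have hfin : C.Finite := Set.toFinite _
  have hncard : C.ncard ≤ S.ncard := by
    rw [← Nat.card_coe_set_eq, ← Nat.card_coe_set_eq]
    exact le_of_eq hcard.symm
  have hset : S = C := Set.eq_of_subset_of_ncard_le hsub hncard hfin
  ext g
  simp only [SetLike.mem_coe, Set.mem_setOf_eq]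
  constructor
  · intro hg y
    have hcom : Commute g y := (Subgroup.mem_center_iff.mp hg y).symm
    have : ((g, y) : G × G) ∈ C := hcom
    rw [← hset] at this
    exact this
  · intro hg
    rw [Subgroup.mem_center_iff]
    intro y
    have : ((g, y) : G × G) ∈ S := hg y
    rw [hset] at this
    exact (this : Commute g y).symm.eq
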